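/- The following 24 words in the generators of Γ₁ are each equal to the 5×5 identity matrix: g₃g₁₆g₄², g₃g₁₀⁻²g₄⁻¹, g₂g₄g₁₆⁻¹g₁₅⁻¹, g₄g₁₆g₁₁g₁₄, g₇g₁₅⁻¹g₁₆⁻², g₄g₁₄⁻¹g₁₃g₇⁻¹, g₃²g₇⁻¹g₁₆⁻¹, g₁g₇⁻¹g₃g₁₀, g₄g₁₀⁻¹g₁₄⁻², g₃g₁₅⁻¹g₆⁻¹g₁₀⁻¹, g₁g₁₃⁻¹g₁₄⁻¹g₃, g₆²g₁₀⁻¹g₁₄, g₂g₁₁g₄g₆⁻¹, g₁g₁₅⁻¹g₁₆g₆⁻¹, g₂g₁₆⁻¹g₁₀⁻¹g₆, g₁g₁₃g₁₀g₁₅, g₆g₁₄⁻¹g₁₃⁻², g₁g₁₁²g₂⁻¹, g₂g₁₄⁻¹g₇⁻¹g₁₁⁻¹, g₃g₁₃⁻¹g₁₁⁻¹g₇, g₁²g₂g₁₃, g₂²g₆⁻¹g₁₃⁻¹, g₇²g₁₁⁻¹g₁₅, g₁g₁₁⁻¹g₁₅⁻². (These are the defining relators of the fundamental group Γ₁ of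 the manifold 24c1.1, one for each of the 24 ridge cycles.) -/
import Mathlib


open Matrix

noncomputable def g1 : Matrix (Fin 5) (Fin 5) ℝ :=
  (1/2 : ℝ) • !![-3, -3, 1, 1, 4; -1, 1, 1, -1, 0; -3, -3, -1, -1, 4; 1, -1, 1, -1, 0; -4, -4, 0, 0, 6]

noncomputable def g2 : Matrix (Fin 5) (Fin 5) ℝ :=
  (1/2 : ℝ) • !![1, 1, -1, 1, 0; 3, -3, 1, 1, 4; 3, -3, -1, -1, 4; 1, 1, 1, -1, 0; 4, -4, 0, 0, 6]

noncomputable def g3 : Matrix (Fin 5) (Fin 5) ℝ :=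
  (1/2 : ℝ) • !![1, 1, -1, 1, 0; 3, -3, 1, 1, -4; 3, -3, -1, -1, -4; 1, 1, 1, -1, 0; -4, 4, 0, 0, 6]

noncomputable def g4 : Matrix (Fin 5) (Fin 5) ℝ :=
  (1/2 : ℝ) • !![-3, -3, 1, 1, -4; -1, 1, 1, -1, 0; -3, -3, -1, -1, -4; 1, -1, 1, -1, 0; 4, 4, 0, 0, 6]

noncomputable def g6 : Matrix (Fin 5) (Fin 5) ℝ :=
  (1/2 : ℝ) • !![-1, 1, -1, -1, 0; -1, -1, -1, 1, 0; 3, -1, -3, -1, 4; 3, 1, -3, 1, 4; 4, 0, -4, 0, 6]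

noncomputable def g7 : Matrix (Fin 5) (Fin 5) ℝ :=
  (1/2 : ℝ) • !![-1, 1, -1, -1, 0; -1, -1, -1, 1, 0; 3, -1, -3, -1, -4; 3, 1, -3, 1, -4; -4, 0, 4, 0, 6]

noncomputable def g10 : Matrix (Fin 5) (Fin 5) ℝ :=
  (1/2 : ℝ) • !![1, 1, 1, -1, 0; -1, -3, 3, -1, -4; 1, -1, -1, -1, 0; -1, 3, -3, -1, 4; 0, 4, -4, 0, 6]

noncomputable def g11 : Matrix (Fin 5) (Fin 5) ℝ :=
  (1/2 : ℝ) • !![1, 1, 1, -1, 0; -1, -3, 3, -1, 4; 1, -1, -1, -1, 0; -1, 3, -3, -1, -4; 0, -4, 4, 0, 6]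

noncomputable def g13 : Matrix (Fin 5) (Fin 5) ℝ :=
  (1/2 : ℝ) • !![-1, -1, -1, 1, 0; -3, -1, 1, -3, 4; -1, 1, 1, 1, 0; -3, 1, -1, -3, 4; -4, 0, 0, -4, 6]

noncomputable def g14 : Matrix (Fin 5) (Fin 5) ℝ :=
  (1/2 : ℝ) • !![-1, 1, 1, -1, 0; -1, -1, -1, -1, 0; -3, -1, 1, 3, -4; 3, -1, 1, -3, 4; 4, 0, 0, -4, 6]

noncomputable def g15 : Matrix (Fin 5) (Fin 5) ℝ :=
  (1/2 : ℝ) • !![-1, 1, 1, -1, 0; -1, -1, -1, -1, 0; -3, -1, 1, 3, 4; 3, -1, 1, -3, -4; -4, 0, 0, 4, 6]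

noncomputable def g16 : Matrix (Fin 5) (Fin 5) ℝ :=
  (1/2 : ℝ) • !![-1, -1, -1, 1, 0; -3, -1, 1, -3, -4; -1, 1, 1, 1, 0; -3, 1, -1, -3, -4; 4, 0, 0, 4, 6]

set_option maxHeartbeats 2000000 in
private theorem mul_fin_five' (a11 a12 a13 a14 a15 a21 a22 a23 a24 a25 a31 a32 a33 a34 a35 a41 a42 a43 a44 a45 a51 a52 a53 a54 a55 b11 b12 b13 b14 b15 b21 b22 b23 b24 b25 b31 b32 b33 b34 b35 b41 b42 b43 b44 b45 b51 b52 b53 b54 b55 : ℝ) :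
    !![a11, a12, a13, a14, a15; a21, a22, a23, a24, a25; a31, a32, a33, a34, a35; a41, a42, a43, a44, a45; a51, a52, a53, a54, a55] * !![b11, b12, b13, b14, b15; b21, b22, b23, b24, b25; b31, b32, b33, b34, b35; b41, b42, b43, b44, b45; b51, b52, b53, b54, b55] = !![a11*b11 + a12*b21 + a13*b31 + a14*b41 + a15*b51, a11*b12 + a12*b22 + a13*b32 + a14*b42 + a15*b52, a11*b13 + a12*b23 + a13*b33 + a14*b43 + a15*b53, a11*b14 + a12*b24 + a13*b34 + a14*b44 + a15*b54, a11*b15 + a12*b25 + a13*b35 + a14*b45 + a15*b55; a21*b11 + a22*b21 + a23*b31 + a24*b41 + a25*b51, a21*b12 + a22*b22 + a23*b32 + a24*b42 + a25*b52, a21*b13 + a22*b23 + a23*b33 + a24*b43 + a25*b53, a21*b14 + a22*b24 + a23*b34 + a24*b44 + a25*b54, a21*b15 + a22*b25 + a23*b35 + a24*b45 + a25*b55; a31*b11 + a32*b21 + a33*b31 + a34*b41 + a35*b51, a31*b12 + a32*b22 + a33*b32 + a34*b42 + a35*b52, a31*b13 + a32*b23 + a33*b33 + a34*b43 + a35*b53,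 a31*b14 + a32*b24 + a33*b34 + a34*b44 + a35*b54, a31*b15 + a32*b25 + a33*b35 + a34*b45 + a35*b55; a41*b11 + a42*b21 + a43*b31 + a44*b41 + a45*b51, a41*b12 + a42*b22 + a43*b32 + a44*b42 + a45*b52, a41*b13 + a42*b23 + a43*b33 + a44*b43 + a45*b53, a41*b14 + a42*b24 + a43*b34 + a44*b44 + a45*b54, a41*b15 + a42*b25 + a43*b35 + a44*b45 + a45*b55; a51*b11 + a52*b21 + a53*b31 + a54*b41 + a55*b51, a51*b12 + a52*b22 + a53*b32 + a54*b42 + a55*b52, a51*b13 + a52*b23 + a53*b33 + a54*b43 + a55*b53, a51*b14 + a52*b24 + a53*b34 + a54*b44 + a55*b54, a51*b15 + a52*b25 + a53*b35 + a54*b45 + a55*b55] := by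
  ext i j
  fin_cases i <;> fin_cases j <;>
    simp [Matrix.mul_apply, Fin.sum_univ_succ, ← add_assoc]

private theorem one_fin_five :
    (1 : Matrix (Fin 5) (Fin 5) ℝ) =
    !![1,0,0,0,0; 0,1,0,0,0; 0,0,1,0,0; 0,0,0,1,0; 0,0,0,0,1] := by
  ext i j
  fin_cases i <;> fin_cases j <;> rfl

set_option maxHeartbeats 1000000 in
private theorem smul_fin_five (x a11 a12 a13 a14 a15 a21 a22 a23 a24 a25 a31 a32 a33 a34 a35 a41 a42 a43 a44 a45 a51 a52 a53 a54 a55 : ℝ) :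
    x • !![a11, a12, a13, a14, a15; a21, a22, a23, a24, a25; a31, a32, a33, a34, a35; a41, a42, a43, a44, a45; a51, a52, a53, a54, a55] = !![x * a11, x * a12, x * a13, x * a14, x * a15; x * a21, x * a22, x * a23, x * a24, x * a25; x * a31, x * a32, x * a33, x * a34, x * a35; x * a41, x * a42, x * a43, x * a44, x * a45; x * a51, x * a52, x * a53, x * a54, x * a55] := by
  ext i j
  fin_cases i <;> fin_cases j <;> simp [Matrix.smul_apply]

set_option maxHeartbeats 1000000 in
private theorem eq_fin_five {a11 a12 a13 a14 a15 a21 a22 a23 a24 a25 a31 a32 a33 a34 a35 a41 a42 a43 a44 a45 a51 a52 a53 a54 a55 b11 b12 b13 b14 b15 b21 b22 b23 b24 b25 b31 b32 b33 b34 b35 b41 b42 b43 b44 b45 b51 b52 b53 b54 b55 : ℝ}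
    (h11 : a11 = b11) (h12 : a12 = b12) (h13 : a13 = b13) (h14 : a14 = b14) (h15 : a15 = b15) (h21 : a21 = b21) (h22 : a22 = b22) (h23 : a23 = b23) (h24 : a24 = b24) (h25 : a25 = b25) (h31 : a31 = b31) (h32 : a32 = b32) (h33 : a33 = b33) (h34 : a34 = b34) (h35 : a35 = b35) (h41 : a41 = b41) (h42 : a42 = b42) (h43 : a43 = b43) (h44 : a44 = b44) (h45 : a45 = b45) (h51 : a51 = b51) (h52 : a52 = b52) (h53 : a53 = b53) (h54 : a54 = b54) (h55 : a55 = b55) :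
    !![a11, a12, a13, a14, a15; a21, a22, a23, a24, a25; a31, a32, a33, a34, a35; a41, a42, a43, a44, a45; a51, a52, a53, a54, a55] = !![b11, b12, b13, b14, b15; b21, b22, b23, b24, b25; b31, b32, b33, b34, b35; b41, b42, b43, b44, b45; b51, b52, b53, b54, b55] := by
  subst_vars; rfl

noncomputable def hg1 : Matrix (Fin 5) (Fin 5) ℝ := (1/2 : ℝ) • !![-3, -1, -3, 1, 4; -3, 1, -3, -1, 4; 1, 1, -1, 1, 0; 1, -1, -1, -1, 0; -4, 0, -4, 0, 6]

set_option maxHeartbeats 1000000 in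
private lemma inv_g1 : g1⁻¹ = hg1 := by
  apply inv_eq_left_inv
  rw [one_fin_five]
  simp only [g1, hg1, Matrix.smul_mul, Matrix.mul_smul, smul_smul, mul_fin_five', smul_fin_five]
  apply eq_fin_five <;> norm_num

noncomputable def hg2 : Matrix (Fin 5) (Fin 5) ℝ := (1/2 : ℝ) • !![1, 3, 3, 1, -4; 1, -3, -3, 1, 4; -1, 1, -1, 1, 0; 1, 1, -1, -1, 0; 0, -4, -4, 0, 6]

set_option maxHeartbeats 1000000 in
private lemma inv_g2 : g2⁻¹ = hg2 := by
  apply inv_eq_left_inv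
  rw [one_fin_five]
  simp only [g2, hg2, Matrix.smul_mul, Matrix.mul_smul, smul_smul, mul_fin_five', smul_fin_five]
  apply eq_fin_five <;> norm_num

noncomputable def hg3 : Matrix (Fin 5) (Fin 5) ℝ := (1/2 : ℝ) • !![1, 3, 3, 1, 4; 1, -3, -3, 1, -4; -1, 1, -1, 1, 0; 1, 1, -1, -1, 0; 0, 4, 4, 0, 6]

set_option maxHeartbeats 1000000 in
private lemma inv_g3 : g3⁻¹ = hg3 := by
  apply inv_eq_left_inv
  rw [one_fin_five]
  simp only [g3, hg3, Matrix.smul_mul, Matrix.mul_smul, smul_smul, mul_fin_five', smul_fin_five]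
  apply eq_fin_five <;> norm_num

noncomputable def hg4 : Matrix (Fin 5) (Fin 5) ℝ := (1/2 : ℝ) • !![-3, -1, -3, 1, -4; -3, 1, -3, -1, -4; 1, 1, -1, 1, 0; 1, -1, -1, -1, 0; 4, 0, 4, 0, 6]

set_option maxHeartbeats 1000000 in
private lemma inv_g4 : g4⁻¹ = hg4 := by
  apply inv_eq_left_inv
  rw [one_fin_five]
  simp only [g4, hg4, Matrix.smul_mul, Matrix.mul_smul, smul_smul, mul_fin_five', smul_fin_five]
  apply eq_fin_five <;> norm_num

noncomputable def hg6 : Matrix (Fin 5) (Fin 5) ℝ := (1/2 : ℝ) • !![-1, -1, 3, 3, -4; 1, -1, -1, 1, 0; -1, -1, -3, -3, 4; -1, 1, -1, 1, 0; 0, 0, -4, -4, 6]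

set_option maxHeartbeats 1000000 in
private lemma inv_g6 : g6⁻¹ = hg6 := by
  apply inv_eq_left_inv
  rw [one_fin_five]
  simp only [g6, hg6, Matrix.smul_mul, Matrix.mul_smul, smul_smul, mul_fin_five', smul_fin_five]
  apply eq_fin_five <;> norm_num

noncomputable def hg7 : Matrix (Fin 5) (Fin 5) ℝ := (1/2 : ℝ) • !![-1, -1, 3, 3, 4; 1, -1, -1, 1, 0; -1, -1, -3, -3, -4; -1, 1, -1, 1, 0; 0, 0, 4, 4, 6]

set_option maxHeartbeats 1000000 in
private lemma inv_g7 : g7⁻¹ = hg7 := by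
  apply inv_eq_left_inv
  rw [one_fin_five]
  simp only [g7, hg7, Matrix.smul_mul, Matrix.mul_smul, smul_smul, mul_fin_five', smul_fin_five]
  apply eq_fin_five <;> norm_num

noncomputable def hg10 : Matrix (Fin 5) (Fin 5) ℝ := (1/2 : ℝ) • !![1, -1, 1, -1, 0; 1, -3, -1, 3, -4; 1, 3, -1, -3, 4; -1, -1, -1, -1, 0; 0, 4, 0, -4, 6]

set_option maxHeartbeats 1000000 in
private lemma inv_g10 : g10⁻¹ = hg10 := by
  apply inv_eq_left_inv
  rw [one_fin_five]
  simp only [g10, hg10, Matrix.smul_mul, Matrix.mul_smul, smul_smul, mul_fin_five', smul_fin_five]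
  apply eq_fin_five <;> norm_num

noncomputable def hg11 : Matrix (Fin 5) (Fin 5) ℝ := (1/2 : ℝ) • !![1, -1, 1, -1, 0; 1, -3, -1, 3, 4; 1, 3, -1, -3, -4; -1, -1, -1, -1, 0; 0, -4, 0, 4, 6]

set_option maxHeartbeats 1000000 in
private lemma inv_g11 : g11⁻¹ = hg11 := by
  apply inv_eq_left_inv
  rw [one_fin_five]
  simp only [g11, hg11, Matrix.smul_mul, Matrix.mul_smul, smul_smul, mul_fin_five', smul_fin_five]
  apply eq_fin_five <;> norm_num

noncomputable def hg13 : Matrix (Fin 5) (Fin 5) ℝ := (1/2 : ℝ) • !![-1, -3, -1, -3, 4; -1, -1, 1, 1, 0; -1, 1, 1, -1, 0; 1, -3, 1, -3, 4; 0, -4, 0, -4, 6]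

set_option maxHeartbeats 1000000 in
private lemma inv_g13 : g13⁻¹ = hg13 := by
  apply inv_eq_left_inv
  rw [one_fin_five]
  simp only [g13, hg13, Matrix.smul_mul, Matrix.mul_smul, smul_smul, mul_fin_five', smul_fin_five]
  apply eq_fin_five <;> norm_num

noncomputable def hg14 : Matrix (Fin 5) (Fin 5) ℝ := (1/2 : ℝ) • !![-1, -1, -3, 3, -4; 1, -1, -1, -1, 0; 1, -1, 1, 1, 0; -1, -1, 3, -3, 4; 0, 0, 4, -4, 6]

set_option maxHeartbeats 1000000 in
private lemma inv_g14 : g14⁻¹ = hg14 := by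
  apply inv_eq_left_inv
  rw [one_fin_five]
  simp only [g14, hg14, Matrix.smul_mul, Matrix.mul_smul, smul_smul, mul_fin_five', smul_fin_five]
  apply eq_fin_five <;> norm_num

noncomputable def hg15 : Matrix (Fin 5) (Fin 5) ℝ := (1/2 : ℝ) • !![-1, -1, -3, 3, 4; 1, -1, -1, -1, 0; 1, -1, 1, 1, 0; -1, -1, 3, -3, -4; 0, 0, -4, 4, 6]

set_option maxHeartbeats 1000000 in
private lemma inv_g15 : g15⁻¹ = hg15 := by
  apply inv_eq_left_inv
  rw [one_fin_five]
  simp only [g15, hg15, Matrix.smul_mul, Matrix.mul_smul, smul_smul, mul_fin_five', smul_fin_five]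
  apply eq_fin_five <;> norm_num

noncomputable def hg16 : Matrix (Fin 5) (Fin 5) ℝ := (1/2 : ℝ) • !![-1, -3, -1, -3, -4; -1, -1, 1, 1, 0; -1, 1, 1, -1, 0; 1, -3, 1, -3, -4; 0, 4, 0, 4, 6]

set_option maxHeartbeats 1000000 in
private lemma inv_g16 : g16⁻¹ = hg16 := by
  apply inv_eq_left_inv
  rw [one_fin_five]
  simp only [g16, hg16, Matrix.smul_mul, Matrix.mul_smul, smul_smul, mul_fin_five', smul_fin_five]
  apply eq_fin_five <;> norm_num

set_option maxHeartbeats 2000000 in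
private lemma rel1 : g3 * g16 * g4 ^ 2 = 1 := by
  rw [one_fin_five]
  simp only [pow_two]
  simp only [g16, g3, g4, Matrix.smul_mul, Matrix.mul_smul, smul_smul, mul_fin_five', smul_fin_five]
  apply eq_fin_five <;> norm_num

set_option maxHeartbeats 2000000 in
private lemma rel2 : g3 * g10⁻¹ ^ 2 * g4⁻¹ = 1 := by
  rw [one_fin_five]
  simp only [pow_two, inv_g10, inv_g4]
  simp only [g10, g3, g4, hg10, hg4, Matrix.smul_mul, Matrix.mul_smul, smul_smul, mul_fin_five', smul_fin_five]
  apply eq_fin_five <;> norm_num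

set_option maxHeartbeats 2000000 in
private lemma rel3 : g2 * g4 * g16⁻¹ * g15⁻¹ = 1 := by
  rw [one_fin_five]
  simp only [pow_two, inv_g15, inv_g16]
  simp only [g15, g16, g2, g4, hg15, hg16, Matrix.smul_mul, Matrix.mul_smul, smul_smul, mul_fin_five', smul_fin_five]
  apply eq_fin_five <;> norm_num

set_option maxHeartbeats 2000000 in
private lemma rel4 : g4 * g16 * g11 * g14 = 1 := by
  rw [one_fin_five]
  simp only [g11, g14, g16, g4, Matrix.smul_mul, Matrix.mul_smul, smul_smul, mul_fin_five', smul_fin_five]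
  apply eq_fin_five <;> norm_num

set_option maxHeartbeats 2000000 in
private lemma rel5 : g7 * g15⁻¹ * g16⁻¹ ^ 2 = 1 := by
  rw [one_fin_five]
  simp only [pow_two, inv_g15, inv_g16]
  simp only [g15, g16, g7, hg15, hg16, Matrix.smul_mul, Matrix.mul_smul, smul_smul, mul_fin_five', smul_fin_five]
  apply eq_fin_five <;> norm_num

set_option maxHeartbeats 2000000 in
private lemma rel6 : g4 * g14⁻¹ * g13 * g7⁻¹ = 1 := by
  rw [one_fin_five]
  simp only [pow_two, inv_g14, inv_g7]
  simp only [g13, g14, g4, g7, hg14, hg7, Matrix.smul_mul, Matrix.mul_smul, smul_smul, mul_fin_five', smul_fin_five]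
  apply eq_fin_five <;> norm_num

set_option maxHeartbeats 2000000 in
private lemma rel7 : g3 ^ 2 * g7⁻¹ * g16⁻¹ = 1 := by
  rw [one_fin_five]
  simp only [pow_two, inv_g16, inv_g7]
  simp only [g16, g3, g7, hg16, hg7, Matrix.smul_mul, Matrix.mul_smul, smul_smul, mul_fin_five', smul_fin_five]
  apply eq_fin_five <;> norm_num

set_option maxHeartbeats 2000000 in
private lemma rel8 : g1 * g7⁻¹ * g3 * g10 = 1 := by
  rw [one_fin_five]
  simp only [pow_two, inv_g7]
  simp only [g1, g10, g3, g7, hg7, Matrix.smul_mul, Matrix.mul_smul, smul_smul, mul_fin_five', smul_fin_five]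
  apply eq_fin_five <;> norm_num

set_option maxHeartbeats 2000000 in
private lemma rel9 : g4 * g10⁻¹ * g14⁻¹ ^ 2 = 1 := by
  rw [one_fin_five]
  simp only [pow_two, inv_g10, inv_g14]
  simp only [g10, g14, g4, hg10, hg14, Matrix.smul_mul, Matrix.mul_smul, smul_smul, mul_fin_five', smul_fin_five]
  apply eq_fin_five <;> norm_num

set_option maxHeartbeats 2000000 in
private lemma rel10 : g3 * g15⁻¹ * g6⁻¹ * g10⁻¹ = 1 := by
  rw [one_fin_five]
  simp only [pow_two, inv_g10, inv_g15, inv_g6]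
  simp only [g10, g15, g3, g6, hg10, hg15, hg6, Matrix.smul_mul, Matrix.mul_smul, smul_smul, mul_fin_five', smul_fin_five]
  apply eq_fin_five <;> norm_num

set_option maxHeartbeats 2000000 in
private lemma rel11 : g1 * g13⁻¹ * g14⁻¹ * g3 = 1 := by
  rw [one_fin_five]
  simp only [pow_two, inv_g13, inv_g14]
  simp only [g1, g13, g14, g3, hg13, hg14, Matrix.smul_mul, Matrix.mul_smul, smul_smul, mul_fin_five', smul_fin_five]
  apply eq_fin_five <;> norm_num

set_option maxHeartbeats 2000000 in
private lemma rel12 : g6 ^ 2 * g10⁻¹ * g14 = 1 := by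
  rw [one_fin_five]
  simp only [pow_two, inv_g10]
  simp only [g10, g14, g6, hg10, Matrix.smul_mul, Matrix.mul_smul, smul_smul, mul_fin_five', smul_fin_five]
  apply eq_fin_five <;> norm_num

set_option maxHeartbeats 2000000 in
private lemma rel13 : g2 * g11 * g4 * g6⁻¹ = 1 := by
  rw [one_fin_five]
  simp only [pow_two, inv_g6]
  simp only [g11, g2, g4, g6, hg6, Matrix.smul_mul, Matrix.mul_smul, smul_smul, mul_fin_five', smul_fin_five]
  apply eq_fin_five <;> norm_num

set_option maxHeartbeats 2000000 in
private lemma rel14 : g1 * g15⁻¹ * g16 * g6⁻¹ = 1 := by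
  rw [one_fin_five]
  simp only [pow_two, inv_g15, inv_g6]
  simp only [g1, g15, g16, g6, hg15, hg6, Matrix.smul_mul, Matrix.mul_smul, smul_smul, mul_fin_five', smul_fin_five]
  apply eq_fin_five <;> norm_num

set_option maxHeartbeats 2000000 in
private lemma rel15 : g2 * g16⁻¹ * g10⁻¹ * g6 = 1 := by
  rw [one_fin_five]
  simp only [pow_two, inv_g10, inv_g16]
  simp only [g10, g16, g2, g6, hg10, hg16, Matrix.smul_mul, Matrix.mul_smul, smul_smul, mul_fin_five', smul_fin_five]
  apply eq_fin_five <;> norm_num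

set_option maxHeartbeats 2000000 in
private lemma rel16 : g1 * g13 * g10 * g15 = 1 := by
  rw [one_fin_five]
  simp only [g1, g10, g13, g15, Matrix.smul_mul, Matrix.mul_smul, smul_smul, mul_fin_five', smul_fin_five]
  apply eq_fin_five <;> norm_num

set_option maxHeartbeats 2000000 in
private lemma rel17 : g6 * g14⁻¹ * g13⁻¹ ^ 2 = 1 := by
  rw [one_fin_five]
  simp only [pow_two, inv_g13, inv_g14]
  simp only [g13, g14, g6, hg13, hg14, Matrix.smul_mul, Matrix.mul_smul, smul_smul, mul_fin_five', smul_fin_five]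
  apply eq_fin_five <;> norm_num

set_option maxHeartbeats 2000000 in
private lemma rel18 : g1 * g11 ^ 2 * g2⁻¹ = 1 := by
  rw [one_fin_five]
  simp only [pow_two, inv_g2]
  simp only [g1, g11, g2, hg2, Matrix.smul_mul, Matrix.mul_smul, smul_smul, mul_fin_five', smul_fin_five]
  apply eq_fin_five <;> norm_num

set_option maxHeartbeats 2000000 in
private lemma rel19 : g2 * g14⁻¹ * g7⁻¹ * g11⁻¹ = 1 := by
  rw [one_fin_five]
  simp only [pow_two, inv_g11, inv_g14, inv_g7]
  simp only [g11, g14, g2, g7, hg11, hg14, hg7, Matrix.smul_mul, Matrix.mul_smul, smul_smul, mul_fin_five', smul_fin_five]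
  apply eq_fin_five <;> norm_num

set_option maxHeartbeats 2000000 in
private lemma rel20 : g3 * g13⁻¹ * g11⁻¹ * g7 = 1 := by
  rw [one_fin_five]
  simp only [pow_two, inv_g11, inv_g13]
  simp only [g11, g13, g3, g7, hg11, hg13, Matrix.smul_mul, Matrix.mul_smul, smul_smul, mul_fin_five', smul_fin_five]
  apply eq_fin_five <;> norm_num

set_option maxHeartbeats 2000000 in
private lemma rel21 : g1 ^ 2 * g2 * g13 = 1 := by
  rw [one_fin_five]
  simp only [pow_two]
  simp only [g1, g13, g2, Matrix.smul_mul, Matrix.mul_smul, smul_smul, mul_fin_five', smul_fin_five]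
  apply eq_fin_five <;> norm_num

set_option maxHeartbeats 2000000 in
private lemma rel22 : g2 ^ 2 * g6⁻¹ * g13⁻¹ = 1 := by
  rw [one_fin_five]
  simp only [pow_two, inv_g13, inv_g6]
  simp only [g13, g2, g6, hg13, hg6, Matrix.smul_mul, Matrix.mul_smul, smul_smul, mul_fin_five', smul_fin_five]
  apply eq_fin_five <;> norm_num

set_option maxHeartbeats 2000000 in
private lemma rel23 : g7 ^ 2 * g11⁻¹ * g15 = 1 := by
  rw [one_fin_five]
  simp only [pow_two, inv_g11]
  simp only [g11, g15, g7, hg11, Matrix.smul_mul, Matrix.mul_smul, smul_smul, mul_fin_five', smul_fin_five]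
  apply eq_fin_five <;> norm_num

set_option maxHeartbeats 2000000 in
private lemma rel24 : g1 * g11⁻¹ * g15⁻¹ ^ 2 = 1 := by
  rw [one_fin_five]
  simp only [pow_two, inv_g11, inv_g15]
  simp only [g1, g11, g15, hg11, hg15, Matrix.smul_mul, Matrix.mul_smul, smul_smul, mul_fin_five', smul_fin_five]
  apply eq_fin_five <;> norm_num

theorem stmt8 :
    g3 * g16 * g4 ^ 2 = 1 ∧
    g3 * g10⁻¹ ^ 2 * g4⁻¹ = 1 ∧
    g2 * g4 * g16⁻¹ * g15⁻¹ = 1 ∧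
    g4 * g16 * g11 * g14 = 1 ∧
    g7 * g15⁻¹ * g16⁻¹ ^ 2 = 1 ∧
    g4 * g14⁻¹ * g13 * g7⁻¹ = 1 ∧
    g3 ^ 2 * g7⁻¹ * g16⁻¹ = 1 ∧
    g1 * g7⁻¹ * g3 * g10 = 1 ∧
    g4 * g10⁻¹ * g14⁻¹ ^ 2 = 1 ∧
    g3 * g15⁻¹ * g6⁻¹ * g10⁻¹ = 1 ∧
    g1 * g13⁻¹ * g14⁻¹ * g3 = 1 ∧
    g6 ^ 2 * g10⁻¹ * g14 = 1 ∧
    g2 * g11 * g4 * g6⁻¹ = 1 ∧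
    g1 * g15⁻¹ * g16 * g6⁻¹ = 1 ∧
    g2 * g16⁻¹ * g10⁻¹ * g6 = 1 ∧
    g1 * g13 * g10 * g15 = 1 ∧
    g6 * g14⁻¹ * g13⁻¹ ^ 2 = 1 ∧
    g1 * g11 ^ 2 * g2⁻¹ = 1 ∧
    g2 * g14⁻¹ * g7⁻¹ * g11⁻¹ = 1 ∧
    g3 * g13⁻¹ * g11⁻¹ * g7 = 1 ∧
    g1 ^ 2 * g2 * g13 = 1 ∧
    g2 ^ 2 * g6⁻¹ * g13⁻¹ = 1 ∧
    g7 ^ 2 * g11⁻¹ * g15 = 1 ∧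
    g1 * g11⁻¹ * g15⁻¹ ^ 2 = 1 := by
  exact ⟨rel1, rel2, rel3, rel4, rel5, rel6, rel7, rel8, rel9, rel10, rel11, rel12, rel13, rel14, rel15, rel16, rel17, rel18, rel19, rel20, rel21, rel22, rel23, rel24⟩
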